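/- arXiv:2101.12103 — 2 statements merged into one kernel-verified Lean document; each statement's English description precedes it below -/
import Mathlib

section
/- (Necessity part of Proposition 2.5.) Let d ≥ 1 and let I ⊂ ℤ^d∖{0} be a finite set. Suppose that H_∞(I) is uniformly dense in the continuous periodic functions, i.e., for every continuous (2πℤ^d)-periodic f : ℝ^d → ℝ and every ε > 0 there exists g ∈ H_∞(I) with sup_{x ∈ ℝ^d} |f(x) − g(x)| < ε. Then I is a generator and I satisfies the connectedness condition. -/
open Real MeasureTheory

/-- ⟨x, m⟩ = ∑ x_j m_j for x ∈ ℝ^d, m ∈ ℤ^d. -/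
noncomputable def ip (d : ℕ) (x : Fin d → ℝ) (m : Fin d → ℤ) : ℝ :=
  ∑ j, x j * (m j : ℝ)

/-- Integer inner product on ℤ^d. -/
def ipZ (d : ℕ) (m l : Fin d → ℤ) : ℤ := ∑ j, m j * l j

/-- c_m(x) = cos⟨x,m⟩. -/
noncomputable def cmap (d : ℕ) (m : Fin d → ℤ) : (Fin d → ℝ) → ℝ :=
  fun x => Real.cos (ip d x m)

/-- s_m(x) = sin⟨x,m⟩. -/
noncomputable def smap (d : ℕ) (m : Fin d → ℤ) : (Fin d → ℝ) → ℝ :=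
  fun x => Real.sin (ip d x m)

/-- B(φ)(x) = ∑_j (∂_{x_j} φ(x))². -/
noncomputable def Bop (d : ℕ) (φ : (Fin d → ℝ) → ℝ) : (Fin d → ℝ) → ℝ :=
  fun x => ∑ j, (fderiv ℝ φ x (Pi.single j 1)) ^ 2

/-- Functions representable as θ₀ − ∑_{j=1}^n B(θ_j) with θ's in H, n ≥ 1. -/
noncomputable def BRep (d : ℕ) (H : Set ((Fin d → ℝ) → ℝ)) : Set ((Fin d → ℝ) → ℝ) :=
  { f | ∃ n : ℕ, 1 ≤ n ∧ ∃ θ₀ ∈ H, ∃ θ : Fin n → (Fin d → ℝ) → ℝ,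
      (∀ j, θ j ∈ H) ∧ f = θ₀ - ∑ j, Bop d (θ j) }

/-- F(H): f such that both f and −f are representable. -/
noncomputable def Fop (d : ℕ) (H : Set ((Fin d → ℝ) → ℝ)) : Set ((Fin d → ℝ) → ℝ) :=
  { f | f ∈ BRep d H ∧ -f ∈ BRep d H }

/-- H(I): span of {1} ∪ {c_k, s_k : k ∈ I}. -/
noncomputable def H0 (d : ℕ) (I : Finset (Fin d → ℤ)) : Set ((Fin d → ℝ) → ℝ) :=
  ↑(Submodule.span ℝ
      ({fun _ => (1:ℝ)} ∪ ⋃ k ∈ (I : Set (Fin d → ℤ)), {cmap d k, smap d k}))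

noncomputable def HSeq (d : ℕ) (I : Finset (Fin d → ℤ)) : ℕ → Set ((Fin d → ℝ) → ℝ)
  | 0 => H0 d I
  | j + 1 => Fop d (HSeq d I j)

/-- H_∞(I) = ⋃_j H_j(I). -/
noncomputable def Hinf (d : ℕ) (I : Finset (Fin d → ℤ)) : Set ((Fin d → ℝ) → ℝ) :=
  ⋃ j, HSeq d I j

/-- I generates ℤ^d over ℤ. -/
def IsGenerator (d : ℕ) (I : Finset (Fin d → ℤ)) : Prop :=
  ∀ n : Fin d → ℤ, ∃ a : (Fin d → ℤ) → ℤ, n = ∑ k ∈ I, a k • k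

/-- Connectedness condition of Proposition 2.5. -/
def ConnectedSet (d : ℕ) (I : Finset (Fin d → ℤ)) : Prop :=
  ∀ l ∈ I, ∀ m ∈ I, ∃ k : ℕ, ∃ n : Fin (k + 1) → (Fin d → ℤ),
    (∀ j, n j ∈ I) ∧ ipZ d l (n 0) ≠ 0 ∧
    (∀ j : Fin k, ipZ d (n j.castSucc) (n j.succ) ≠ 0) ∧
    ipZ d (n (Fin.last k)) m ≠ 0

/-- (2πℤ^d)-periodicity for real-valued functions. -/
def Periodic2pi (d : ℕ) (f : (Fin d → ℝ) → ℝ) : Prop :=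
  ∀ (x : Fin d → ℝ) (k : Fin d → ℤ), f (x + fun j => 2 * Real.pi * (k j : ℝ)) = f x


-- complex exponential character
noncomputable def Efn (d : ℕ) (k : Fin d → ℤ) : (Fin d → ℝ) → ℂ :=
  fun x => Complex.exp ((ip d x k : ℂ) * Complex.I)

lemma ip_add_right (d : ℕ) (x : Fin d → ℝ) (k l : Fin d → ℤ) :
    ip d x (k + l) = ip d x k + ip d x l := by
  simp [ip, mul_add, Finset.sum_add_distrib]

lemma ip_neg_right (d : ℕ) (x : Fin d → ℝ) (k : Fin d → ℤ) :
    ip d x (-k) = -ip d x k := by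
  simp [ip, Finset.sum_neg_distrib]

lemma ip_zero_right (d : ℕ) (x : Fin d → ℝ) : ip d x 0 = 0 := by simp [ip]

lemma ip_single (d : ℕ) (j : Fin d) (k : Fin d → ℤ) :
    ip d (Pi.single j 1) k = (k j : ℝ) := by
  rw [ip, Finset.sum_eq_single j]
  · simp
  · intro i _ hij; simp [Pi.single_apply, hij]
  · simp

lemma Efn_mul (d : ℕ) (k l : Fin d → ℤ) (x : Fin d → ℝ) :
    Efn d k x * Efn d l x = Efn d (k + l) x := by
  rw [Efn, Efn, Efn, ← Complex.exp_add, ip_add_right]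
  push_cast
  ring_nf

lemma Efn_zero (d : ℕ) (x : Fin d → ℝ) : Efn d 0 x = 1 := by
  simp [Efn, ip_zero_right]

lemma norm_Efn (d : ℕ) (k : Fin d → ℤ) (x : Fin d → ℝ) : ‖Efn d k x‖ = 1 := by
  simpa [Efn] using Complex.abs_exp_ofReal_mul_I (ip d x k)

lemma continuous_ip (d : ℕ) (k : Fin d → ℤ) : Continuous (fun x => ip d x k) := by
  unfold ip
  exact continuous_finset_sum _ fun j _ => (continuous_apply j).mul continuous_const

lemma continuous_Efn (d : ℕ) (k : Fin d → ℤ) : Continuous (Efn d k) := by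
  unfold Efn
  exact Complex.continuous_exp.comp
    ((Complex.continuous_ofReal.comp (continuous_ip d k)).mul continuous_const)

/-- The ℝ-linear map x ↦ ⟨x,k⟩ * I. -/
noncomputable def Lmap (d : ℕ) (k : Fin d → ℤ) : (Fin d → ℝ) →L[ℝ] ℂ :=
  ∑ j, ((k j : ℂ) * Complex.I) • (Complex.ofRealCLM.comp (ContinuousLinearMap.proj j))

lemma Lmap_apply (d : ℕ) (k : Fin d → ℤ) (v : Fin d → ℝ) :
    Lmap d k v = (ip d v k : ℂ) * Complex.I := by
  rw [Lmap, ContinuousLinearMap.sum_apply, ip]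
  push_cast
  rw [Finset.sum_mul]
  refine Finset.sum_congr rfl fun j _ => ?_
  simp only [ContinuousLinearMap.coe_smul', Pi.smul_apply, Function.comp_apply,
    ContinuousLinearMap.coe_comp', Complex.ofRealCLM_apply, ContinuousLinearMap.proj_apply,
    smul_eq_mul]
  ring

lemma hasFDerivAt_Efn (d : ℕ) (k : Fin d → ℤ) (x : Fin d → ℝ) :
    HasFDerivAt (Efn d k) (Efn d k x • Lmap d k) x := by
  have h1 : Efn d k = fun x => Complex.exp (Lmap d k x) := by
    funext y; rw [Efn, Lmap_apply]
  have h2 : HasFDerivAt (fun x => Complex.exp (Lmap d k x))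
      (Complex.exp (Lmap d k x) • Lmap d k) x :=
    (Complex.hasDerivAt_exp (Lmap d k x)).comp_hasFDerivAt x (Lmap d k).hasFDerivAt
  rw [h1]
  exact h2
/-- Real functions that are trig polynomials with frequencies in S. -/
def HGood (d : ℕ) (S : Set (Fin d → ℤ)) : Set ((Fin d → ℝ) → ℝ) :=
  {g | ∃ T : Finset (Fin d → ℤ), ∃ c : (Fin d → ℤ) → ℂ, ↑T ⊆ S ∧
    ∀ x, (g x : ℂ) = ∑ k ∈ T, c k * Efn d k x}

lemma hgood_extend {d : ℕ} {g : (Fin d → ℝ) → ℝ}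
    {T T' : Finset (Fin d → ℤ)} {c : (Fin d → ℤ) → ℂ} (hTT : T ⊆ T')
    (h : ∀ x, (g x : ℂ) = ∑ k ∈ T, c k * Efn d k x) :
    ∀ x, (g x : ℂ) = ∑ k ∈ T', (if k ∈ T then c k else 0) * Efn d k x := by
  intro x
  rw [h x, ← Finset.sum_subset hTT (fun k _ hk => by simp [hk])]
  exact Finset.sum_congr rfl fun k hk => by simp [hk]

lemma hgood_zero {d : ℕ} {S : Set (Fin d → ℤ)} : (0 : (Fin d → ℝ) → ℝ) ∈ HGood d S :=
  ⟨∅, fun _ => 0, by simp, by simp⟩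

lemma hgood_add {d : ℕ} {S : Set (Fin d → ℤ)} {g h : (Fin d → ℝ) → ℝ}
    (hg : g ∈ HGood d S) (hh : h ∈ HGood d S) : g + h ∈ HGood d S := by
  obtain ⟨T1, c1, hT1, h1⟩ := hg
  obtain ⟨T2, c2, hT2, h2⟩ := hh
  refine ⟨T1 ∪ T2, fun k => (if k ∈ T1 then c1 k else 0) + (if k ∈ T2 then c2 k else 0),
    by intro k hk; rcases Finset.mem_union.1 (by exact_mod_cast hk) with h | h
       exacts [hT1 h, hT2 h], fun x => ?_⟩
  have e1 := hgood_extend (Finset.subset_union_left (s₂ := T2)) h1 x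
  have e2 := hgood_extend (Finset.subset_union_right (s₁ := T1)) h2 x
  rw [Pi.add_apply, Complex.ofReal_add, e1, e2, ← Finset.sum_add_distrib]
  exact Finset.sum_congr rfl fun k _ => by ring

lemma hgood_smul {d : ℕ} {S : Set (Fin d → ℤ)} {g : (Fin d → ℝ) → ℝ} (a : ℝ)
    (hg : g ∈ HGood d S) : a • g ∈ HGood d S := by
  obtain ⟨T, c, hT, h⟩ := hg
  refine ⟨T, fun k => (a : ℂ) * c k, hT, fun x => ?_⟩
  simp only [Pi.smul_apply, smul_eq_mul, Complex.ofReal_mul, h x, Finset.mul_sum, mul_assoc]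

lemma hgood_neg {d : ℕ} {S : Set (Fin d → ℤ)} {g : (Fin d → ℝ) → ℝ}
    (hg : g ∈ HGood d S) : -g ∈ HGood d S := by
  have := hgood_smul (-1 : ℝ) hg
  simpa using this

lemma hgood_sub {d : ℕ} {S : Set (Fin d → ℤ)} {g h : (Fin d → ℝ) → ℝ}
    (hg : g ∈ HGood d S) (hh : h ∈ HGood d S) : g - h ∈ HGood d S := by
  rw [sub_eq_add_neg]; exact hgood_add hg (hgood_neg hh)

lemma hgood_sum {d : ℕ} {S : Set (Fin d → ℤ)} {n : ℕ} {F : Fin n → (Fin d → ℝ) → ℝ}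
    (hF : ∀ j, F j ∈ HGood d S) : (∑ j, F j) ∈ HGood d S := by
  classical
  exact Finset.sum_induction F (· ∈ HGood d S) (fun a b ha hb => hgood_add ha hb)
    hgood_zero (fun j _ => hF j)
lemma hgood_Bop {d : ℕ} {S : Set (Fin d → ℤ)}
    (hS : ∀ k ∈ S, ∀ l ∈ S, ipZ d k l ≠ 0 → k + l ∈ S)
    {θ : (Fin d → ℝ) → ℝ} (hθ : θ ∈ HGood d S) : Bop d θ ∈ HGood d S := by
  classical
  obtain ⟨T, c, hT, h⟩ := hθ
  set Θ : (Fin d → ℝ) → ℂ := fun x => ∑ k ∈ T, c k * Efn d k x with hΘdef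
  set D : (Fin d → ℝ) → ((Fin d → ℝ) →L[ℝ] ℂ) :=
    fun x => ∑ k ∈ T, (c k * Efn d k x) • Lmap d k with hDdef
  have hΘd : ∀ x, HasFDerivAt Θ (D x) x := by
    intro x
    refine HasFDerivAt.fun_sum fun k _ => ?_
    have h1 := (hasFDerivAt_Efn d k x).const_mul (c k)
    rwa [smul_smul] at h1
  have hθre : θ = fun x => (Θ x).re := by
    funext x
    have hx : Θ x = ((θ x : ℝ) : ℂ) := (h x).symm
    rw [hx, Complex.ofReal_re]
  have hθd : ∀ x, HasFDerivAt θ (Complex.reCLM.comp (D x)) x := by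
    intro x
    rw [hθre]
    exact (Complex.reCLM.hasFDerivAt).comp x (hΘd x)
  have hΘo : Θ = fun x => ((θ x : ℝ) : ℂ) := funext fun x => (h x).symm
  have huniq : ∀ x, Complex.ofRealCLM.comp (Complex.reCLM.comp (D x)) = D x := by
    intro x
    have h2 : HasFDerivAt Θ (Complex.ofRealCLM.comp (Complex.reCLM.comp (D x))) x := by
      rw [hΘo]
      exact (Complex.ofRealCLM.hasFDerivAt).comp x (hθd x)
    exact h2.unique (hΘd x)
  have key : ∀ (x : Fin d → ℝ) (j : Fin d),
      ((fderiv ℝ θ x (Pi.single j 1) : ℝ) : ℂ)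
        = ∑ k ∈ T, c k * Efn d k x * ((k j : ℂ) * Complex.I) := by
    intro x j
    have h1 : fderiv ℝ θ x = Complex.reCLM.comp (D x) := (hθd x).fderiv
    have h2 : ((fderiv ℝ θ x (Pi.single j 1) : ℝ) : ℂ)
        = Complex.ofRealCLM.comp (Complex.reCLM.comp (D x)) (Pi.single j 1) := by
      rw [h1]; rfl
    rw [h2, huniq x, hDdef]
    rw [ContinuousLinearMap.sum_apply]
    refine Finset.sum_congr rfl fun k _ => ?_
    rw [ContinuousLinearMap.smul_apply, Lmap_apply, ip_single, smul_eq_mul]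
    push_cast
    ring
  set w : ((Fin d → ℤ) × (Fin d → ℤ)) → ℂ :=
    fun p => -((ipZ d p.1 p.2 : ℤ) : ℂ) * c p.1 * c p.2 with hwdef
  have hBop : ∀ x, ((Bop d θ x : ℝ) : ℂ) = ∑ p ∈ T ×ˢ T, w p * Efn d (p.1 + p.2) x := by
    intro x
    rw [Bop]
    push_cast
    calc (∑ j, ((fderiv ℝ θ x (Pi.single j 1) : ℝ) : ℂ) ^ 2)
        = ∑ j, (∑ k ∈ T, c k * Efn d k x * ((k j : ℂ) * Complex.I))
            * (∑ k ∈ T, c k * Efn d k x * ((k j : ℂ) * Complex.I)) := by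
          refine Finset.sum_congr rfl fun j _ => ?_
          rw [key x j, sq]
      _ = ∑ j, ∑ p ∈ T ×ˢ T, (c p.1 * Efn d p.1 x * ((p.1 j : ℂ) * Complex.I))
            * (c p.2 * Efn d p.2 x * ((p.2 j : ℂ) * Complex.I)) := by
          refine Finset.sum_congr rfl fun j _ => ?_
          rw [Finset.sum_mul_sum, Finset.sum_product]
      _ = ∑ p ∈ T ×ˢ T, ∑ j, (c p.1 * Efn d p.1 x * ((p.1 j : ℂ) * Complex.I))
            * (c p.2 * Efn d p.2 x * ((p.2 j : ℂ) * Complex.I)) := Finset.sum_comm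
      _ = ∑ p ∈ T ×ˢ T, w p * Efn d (p.1 + p.2) x := by
          refine Finset.sum_congr rfl fun p _ => ?_
          have : ∑ j, (c p.1 * Efn d p.1 x * ((p.1 j : ℂ) * Complex.I))
              * (c p.2 * Efn d p.2 x * ((p.2 j : ℂ) * Complex.I))
              = (c p.1 * Efn d p.1 x * (c p.2 * Efn d p.2 x)) *
                  ((∑ j, ((p.1 j : ℂ) * (p.2 j : ℂ))) * (Complex.I * Complex.I)) := by
            rw [Finset.sum_mul, Finset.mul_sum]
            refine Finset.sum_congr rfl fun j _ => by ring
          rw [this, Complex.I_mul_I, hwdef, ← Efn_mul]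
          have hip : (∑ j, ((p.1 j : ℂ) * (p.2 j : ℂ))) = ((ipZ d p.1 p.2 : ℤ) : ℂ) := by
            rw [ipZ]; push_cast; ring
          rw [hip]; ring
  -- repackage as a HGood certificate
  set P := (T ×ˢ T).filter (fun p => ipZ d p.1 p.2 ≠ 0) with hPdef
  refine ⟨P.image (fun p => p.1 + p.2), fun m => ∑ p ∈ P.filter (fun p => p.1 + p.2 = m), w p,
    ?_, fun x => ?_⟩
  · intro m hm
    obtain ⟨p, hp, rfl⟩ := Finset.mem_image.1 (by exact_mod_cast hm)
    rw [hPdef, Finset.mem_filter, Finset.mem_product] at hp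
    exact hS p.1 (hT hp.1.1) p.2 (hT hp.1.2) hp.2
  · rw [hBop x]
    have step1 : ∑ p ∈ T ×ˢ T, w p * Efn d (p.1 + p.2) x
        = ∑ p ∈ P, w p * Efn d (p.1 + p.2) x := by
      rw [hPdef]
      refine (Finset.sum_filter_of_ne fun p _ hne => ?_).symm
      intro hzero
      apply hne
      rw [hwdef]
      simp [hzero]
    rw [step1]
    rw [← Finset.sum_fiberwise_of_maps_to (g := fun p => p.1 + p.2)
      (t := P.image (fun p => p.1 + p.2)) (fun p hp => Finset.mem_image_of_mem _ hp)
      (fun p => w p * Efn d (p.1 + p.2) x)]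
    refine Finset.sum_congr rfl fun m _ => ?_
    rw [Finset.sum_mul]
    refine Finset.sum_congr rfl fun p hp => ?_
    rw [(Finset.mem_filter.1 hp).2]


lemma hgood_one {d : ℕ} {S : Set (Fin d → ℤ)} (h0 : (0 : Fin d → ℤ) ∈ S) :
    (fun _ => (1:ℝ)) ∈ HGood d S :=
  ⟨{0}, fun _ => 1, by simpa using h0, fun x => by simp [Efn_zero]⟩

lemma Efn_neg_eq (d : ℕ) (k : Fin d → ℤ) (x : Fin d → ℝ) :
    Efn d (-k) x = Complex.exp (-(ip d x k : ℂ) * Complex.I) := by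
  rw [Efn, ip_neg_right]; push_cast; ring_nf

lemma hgood_cmap {d : ℕ} {S : Set (Fin d → ℤ)} (k : Fin d → ℤ)
    (hk : k ∈ S) (hk' : -k ∈ S) (hkne : k ≠ 0) : cmap d k ∈ HGood d S := by
  classical
  have hne : k ≠ -k := by
    intro hc
    apply hkne
    funext j
    have := congrFun hc j
    simp only [Pi.neg_apply] at this
    simp only [Pi.zero_apply]
    omega
  refine ⟨{k, -k}, fun _ => 1/2, ?_, fun x => ?_⟩
  · intro m hm
    rcases Finset.mem_insert.1 (by exact_mod_cast hm) with rfl | hm'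
    · exact hk
    · rw [Finset.mem_singleton.1 hm']; exact hk'
  · rw [Finset.sum_pair hne, cmap, Complex.ofReal_cos, Complex.cos, Efn, Efn_neg_eq]
    ring

lemma hgood_smap {d : ℕ} {S : Set (Fin d → ℤ)} (k : Fin d → ℤ)
    (hk : k ∈ S) (hk' : -k ∈ S) (hkne : k ≠ 0) : smap d k ∈ HGood d S := by
  classical
  have hne : k ≠ -k := by
    intro hc
    apply hkne
    funext j
    have := congrFun hc j
    simp only [Pi.neg_apply] at this
    simp only [Pi.zero_apply]
    omega
  refine ⟨{k, -k}, fun m => if m = k then -Complex.I/2 else Complex.I/2, ?_, fun x => ?_⟩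
  · intro m hm
    rcases Finset.mem_insert.1 (by exact_mod_cast hm) with rfl | hm'
    · exact hk
    · rw [Finset.mem_singleton.1 hm']; exact hk'
  · rw [Finset.sum_pair hne, smap, Complex.ofReal_sin, Complex.sin, Efn, Efn_neg_eq]
    beta_reduce
    rw [if_pos rfl, if_neg (Ne.symm hne)]
    ring

lemma hgood_H0 {d : ℕ} {I : Finset (Fin d → ℤ)} {S : Set (Fin d → ℤ)}
    (hI0 : ∀ k ∈ I, k ≠ 0) (h0 : (0 : Fin d → ℤ) ∈ S)
    (hIS : ∀ k ∈ I, k ∈ S) (hIS' : ∀ k ∈ I, -k ∈ S) : H0 d I ⊆ HGood d S := by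
  intro g hg
  rw [H0, SetLike.mem_coe] at hg
  induction hg using Submodule.span_induction with
  | mem x hx =>
    rcases hx with hx | hx
    · rw [Set.mem_singleton_iff.1 hx]; exact hgood_one h0
    · obtain ⟨k, hkI, hk⟩ := Set.mem_iUnion₂.1 hx
      rcases hk with rfl | hk
      · exact hgood_cmap k (hIS k hkI) (hIS' k hkI) (hI0 k hkI)
      · rw [Set.mem_singleton_iff.1 hk]
        exact hgood_smap k (hIS k hkI) (hIS' k hkI) (hI0 k hkI)
  | zero => exact hgood_zero
  | add x y hx hy ihx ihy => exact hgood_add ihx ihy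
  | smul a x hx ihx => exact hgood_smul a ihx

lemma hgood_Hinf {d : ℕ} {I : Finset (Fin d → ℤ)} {S : Set (Fin d → ℤ)}
    (hI0 : ∀ k ∈ I, k ≠ 0) (h0 : (0 : Fin d → ℤ) ∈ S)
    (hIS : ∀ k ∈ I, k ∈ S) (hIS' : ∀ k ∈ I, -k ∈ S)
    (hS : ∀ k ∈ S, ∀ l ∈ S, ipZ d k l ≠ 0 → k + l ∈ S) :
    Hinf d I ⊆ HGood d S := by
  have hstep : ∀ j, HSeq d I j ⊆ HGood d S := by
    intro j
    induction j with
    | zero => exact hgood_H0 hI0 h0 hIS hIS'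
    | succ n ihn =>
      intro g hg
      obtain ⟨⟨n1, _, θ₀, hθ₀, θ, hθ, rfl⟩, _⟩ := hg
      exact hgood_sub (ihn hθ₀) (hgood_sum fun j => hgood_Bop hS (ihn (hθ j)))
  intro g hg
  obtain ⟨Sj, ⟨j, rfl⟩, hj⟩ := hg
  exact hstep j hj


noncomputable def box (d : ℕ) : Set (Fin d → ℝ) := Set.univ.pi fun _ => Set.Ioc 0 (2*π)

lemma box_measurable (d : ℕ) : MeasurableSet (box d) :=
  MeasurableSet.univ_pi fun _ => measurableSet_Ioc

lemma box_volume (d : ℕ) : volume (box d) = (ENNReal.ofReal (2*π))^d := by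
  rw [box, volume_pi_pi]
  simp [Real.volume_Ioc]

lemma box_volume_toReal (d : ℕ) : (volume (box d)).toReal = (2*π)^d := by
  rw [box_volume, ENNReal.toReal_pow, ENNReal.toReal_ofReal (by positivity)]

lemma integrableOn_Efn (d : ℕ) (k : Fin d → ℤ) : IntegrableOn (Efn d k) (box d) := by
  have hK : IsCompact (Set.univ.pi fun _ : Fin d => Set.Icc (0:ℝ) (2*π)) :=
    isCompact_univ_pi fun _ => isCompact_Icc
  have h1 : IntegrableOn (Efn d k) (Set.univ.pi fun _ : Fin d => Set.Icc (0:ℝ) (2*π)) :=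
    (continuous_Efn d k).continuousOn.integrableOn_compact hK
  exact h1.mono_set (Set.pi_mono fun _ _ => Set.Ioc_subset_Icc_self)

lemma oneDim_integral (n : ℤ) :
    (∫ t in Set.Ioc (0:ℝ) (2*π), Complex.exp ((t:ℂ) * n * Complex.I))
      = if n = 0 then ((2*π : ℝ) : ℂ) else 0 := by
  have h2pi : (0:ℝ) ≤ 2*π := by positivity
  rw [← intervalIntegral.integral_of_le h2pi]
  by_cases hn : n = 0
  · subst hn
    simp only [Int.cast_zero, mul_zero, zero_mul, Complex.exp_zero, if_true]
    rw [intervalIntegral.integral_const]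
    norm_num
  · rw [if_neg hn]
    have hc : ((n:ℂ) * Complex.I) ≠ 0 := by
      simp [Complex.I_ne_zero, Int.cast_eq_zero, hn]
    have heq : ∀ t : ℝ, (t:ℂ) * n * Complex.I = ((n:ℂ) * Complex.I) * t := fun t => by ring
    simp_rw [heq]
    rw [integral_exp_mul_complex hc]
    have h1 : Complex.exp ((n:ℂ) * Complex.I * (2*π:ℝ)) = 1 := by
      have := Complex.exp_int_mul_two_pi_mul_I n
      rw [← this]
      congr 1
      push_cast
      ring
    rw [h1]
    norm_num

lemma integral_Efn (d : ℕ) (k : Fin d → ℤ) :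
    (∫ x in box d, Efn d k x) = if k = 0 then (((2*π)^d : ℝ) : ℂ) else 0 := by
  classical
  set F : ℤ → ℝ → ℂ :=
    fun n => Set.indicator (Set.Ioc (0:ℝ) (2*π)) (fun t => Complex.exp ((t:ℂ) * n * Complex.I))
    with hF
  have hind : Set.indicator (box d) (Efn d k) = fun x => ∏ j, F (k j) (x j) := by
    funext x
    by_cases hx : x ∈ box d
    · rw [Set.indicator_of_mem hx]
      have hxj : ∀ j, x j ∈ Set.Ioc (0:ℝ) (2*π) := fun j => (Set.mem_univ_pi.1 hx) j
      have : ∀ j, F (k j) (x j) = Complex.exp ((x j : ℂ) * (k j) * Complex.I) := fun j =>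
        Set.indicator_of_mem (hxj j) _
      rw [Finset.prod_congr rfl fun j _ => this j, ← Complex.exp_sum, Efn]
      congr 1
      rw [ip]
      push_cast
      rw [Finset.sum_mul]
    · rw [Set.indicator_of_notMem hx]
      have hx' : ¬ ∀ j, x j ∈ Set.Ioc (0:ℝ) (2*π) := fun hall => hx (Set.mem_univ_pi.2 hall)
      obtain ⟨j, hj⟩ := not_forall.1 hx'
      refine (Finset.prod_eq_zero (Finset.mem_univ j) ?_).symm
      rw [hF]
      simp only [Set.indicator_of_notMem hj]
  have hmain : (∫ x in box d, Efn d k x) = ∏ j, ∫ t : ℝ, F (k j) t := by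
    rw [← MeasureTheory.integral_indicator (box_measurable d), hind]
    exact MeasureTheory.integral_fintype_prod_eq_prod (fun j t => F (k j) t)
  have hone : ∀ n : ℤ, (∫ t : ℝ, F n t) = if n = 0 then ((2*π : ℝ) : ℂ) else 0 := by
    intro n
    rw [hF]
    rw [MeasureTheory.integral_indicator measurableSet_Ioc]
    exact oneDim_integral n
  rw [hmain, Finset.prod_congr rfl fun j _ => hone (k j)]
  by_cases hk : k = 0
  · subst hk
    simp only [Pi.zero_apply, if_true]
    rw [Finset.prod_const]
    push_cast
    simp
  · rw [if_neg hk]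
    have : ∃ j, k j ≠ 0 := by
      by_contra hcon
      push_neg at hcon
      exact hk (funext hcon)
    obtain ⟨j, hj⟩ := this
    exact Finset.prod_eq_zero (Finset.mem_univ j) (by rw [if_neg hj])


lemma cmap_continuous (d : ℕ) (m : Fin d → ℤ) : Continuous (cmap d m) :=
  Real.continuous_cos.comp (continuous_ip d m)

lemma cmap_periodic (d : ℕ) (m : Fin d → ℤ) : Periodic2pi d (cmap d m) := by
  intro x k
  rw [cmap, cmap]
  have : ip d (x + fun j => 2 * π * (k j : ℝ)) m
      = ip d x m + ((∑ j, k j * m j : ℤ) : ℝ) * (2 * π) := by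
    rw [ip, ip]
    push_cast
    rw [Finset.sum_mul]
    rw [← Finset.sum_add_distrib]
    refine Finset.sum_congr rfl fun j _ => ?_
    simp only [Pi.add_apply]
    ring
  rw [this, Real.cos_add_int_mul_two_pi]

lemma cmap_eq_Efn (d : ℕ) (m : Fin d → ℤ) (x : Fin d → ℝ) :
    ((cmap d m x : ℝ) : ℂ) = (Efn d m x + Efn d (-m) x) / 2 := by
  rw [cmap, Complex.ofReal_cos, Complex.cos, Efn, Efn_neg_eq]

lemma kill {d : ℕ} {I : Finset (Fin d → ℤ)} (hI : ∀ k ∈ I, k ≠ 0)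
    (hdense : ∀ f : (Fin d → ℝ) → ℝ, Continuous f → Periodic2pi d f →
      ∀ ε : ℝ, 0 < ε → ∃ g ∈ Hinf d I, ∀ x : Fin d → ℝ, |f x - g x| < ε)
    (S : Set (Fin d → ℤ)) (h0 : (0 : Fin d → ℤ) ∈ S)
    (hIS : ∀ k ∈ I, k ∈ S) (hIS' : ∀ k ∈ I, -k ∈ S)
    (hS : ∀ k ∈ S, ∀ l ∈ S, ipZ d k l ≠ 0 → k + l ∈ S)
    (μ0 : Fin d → ℤ) (hμ : μ0 ∉ S) (hμ' : -μ0 ∉ S) (hμne : μ0 ≠ 0) : False := by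
  classical
  obtain ⟨g, hgH, hclose⟩ := hdense (cmap d μ0) (cmap_continuous d μ0) (cmap_periodic d μ0)
    (1/4) (by norm_num)
  obtain ⟨T, c, hTS, hrep⟩ := hgood_Hinf hI h0 hIS hIS' hS hgH
  -- the two trig-polynomial integrands
  set f1 : (Fin d → ℝ) → ℂ := fun x => ((cmap d μ0 x : ℝ) : ℂ) * Efn d (-μ0) x with hf1
  set f2 : (Fin d → ℝ) → ℂ := fun x => ((g x : ℝ) : ℂ) * Efn d (-μ0) x with hf2
  have hf1eq : f1 = fun x => (1/2 : ℂ) * Efn d (μ0 + -μ0) x + (1/2 : ℂ) * Efn d (-μ0 + -μ0) x := by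
    funext x
    simp only [hf1]
    rw [cmap_eq_Efn, ← Efn_mul, ← Efn_mul]
    ring
  have hf2eq : f2 = fun x => ∑ k ∈ T, c k * Efn d (k + -μ0) x := by
    funext x
    simp only [hf2]
    rw [hrep x, Finset.sum_mul]
    exact Finset.sum_congr rfl fun k _ => by rw [← Efn_mul]; ring
  have hint1 : IntegrableOn f1 (box d) := by
    rw [hf1eq]
    exact (((integrableOn_Efn d (μ0 + -μ0)).const_mul _).add
      ((integrableOn_Efn d (-μ0 + -μ0)).const_mul _))
  have hint2 : IntegrableOn f2 (box d) := by
    rw [hf2eq]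
    exact MeasureTheory.integrable_finset_sum _ fun k _ => (integrableOn_Efn d (k + -μ0)).const_mul _
  have hval1 : (∫ x in box d, f1 x) = (((2*π)^d : ℝ) : ℂ) / 2 := by
    rw [hf1eq]
    rw [MeasureTheory.integral_add ((integrableOn_Efn d (μ0 + -μ0)).const_mul _)
      ((integrableOn_Efn d (-μ0 + -μ0)).const_mul _)]
    rw [MeasureTheory.integral_const_mul, MeasureTheory.integral_const_mul,
      integral_Efn, integral_Efn]
    rw [if_pos (by simp), if_neg ?hne]
    · ring
    case hne =>
      intro hcon
      apply hμne
      funext j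
      have := congrFun hcon j
      simp only [Pi.add_apply, Pi.neg_apply, Pi.zero_apply] at this ⊢
      omega
  have hval2 : (∫ x in box d, f2 x) = 0 := by
    rw [hf2eq]
    rw [MeasureTheory.integral_finset_sum _ fun k _ => (integrableOn_Efn d (k + -μ0)).const_mul _]
    refine Finset.sum_eq_zero fun k hk => ?_
    rw [MeasureTheory.integral_const_mul, integral_Efn, if_neg, mul_zero]
    intro hcon
    have : k = μ0 := by
      funext j
      have := congrFun hcon j
      simp only [Pi.add_apply, Pi.neg_apply, Pi.zero_apply] at this
      omega
    exact hμ (this ▸ hTS hk)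
  -- the estimate
  have hsub : (∫ x in box d, (f1 x - f2 x)) = (((2*π)^d : ℝ) : ℂ) / 2 := by
    rw [MeasureTheory.integral_sub hint1 hint2, hval1, hval2, sub_zero]
  haveI hfin : Fact (volume (box d) < ⊤) :=
    ⟨by rw [box_volume]; exact ENNReal.pow_lt_top ENNReal.ofReal_lt_top⟩
  have hptwise : ∀ x, ‖f1 x - f2 x‖ ≤ 1/4 := by
    intro x
    have he : f1 x - f2 x = ((cmap d μ0 x - g x : ℝ) : ℂ) * Efn d (-μ0) x := by
      simp only [hf1, hf2]
      push_cast
      ring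
    rw [he, norm_mul, norm_Efn, mul_one, Complex.norm_real, Real.norm_eq_abs]
    exact le_of_lt (hclose x)
  have hbound : ‖∫ x in box d, (f1 x - f2 x)‖ ≤ (1/4) * (volume (box d)).toReal := by
    have h := MeasureTheory.norm_integral_le_of_norm_le_const
      (μ := volume.restrict (box d)) (C := 1/4)
      (Filter.Eventually.of_forall hptwise)
    simpa [MeasureTheory.Measure.restrict_apply_univ, MeasureTheory.measureReal_def] using h
  rw [hsub] at hbound
  rw [box_volume_toReal] at hbound
  have hnorm : ‖(((2*π)^d : ℝ) : ℂ) / 2‖ = (2*π)^d / 2 := by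
    rw [norm_div, Complex.norm_real, Real.norm_eq_abs,
      abs_of_pos (by positivity : (0:ℝ) < (2*π)^d)]
    norm_num
  rw [hnorm] at hbound
  have hpos : (0:ℝ) < (2*π)^d := by positivity
  nlinarith


lemma ipZ_self_ne_zero {d : ℕ} {a : Fin d → ℤ} (ha : a ≠ 0) : ipZ d a a ≠ 0 := by
  have hpos : 0 < ipZ d a a := by
    rw [ipZ]
    obtain ⟨j, hj⟩ : ∃ j, a j ≠ 0 := by
      by_contra h
      push_neg at h
      exact ha (funext fun j => h j)
    exact Finset.sum_pos' (fun i _ => mul_self_nonneg _)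
      ⟨j, Finset.mem_univ j, mul_self_pos.mpr hj⟩
  omega

lemma ipZ_comm (d : ℕ) (a b : Fin d → ℤ) : ipZ d a b = ipZ d b a := by
  rw [ipZ, ipZ]; exact Finset.sum_congr rfl fun j _ => mul_comm _ _

lemma ipZ_add_left (d : ℕ) (a b c : Fin d → ℤ) :
    ipZ d (a + b) c = ipZ d a c + ipZ d b c := by
  rw [ipZ, ipZ, ipZ, ← Finset.sum_add_distrib]
  exact Finset.sum_congr rfl fun j _ => by simp [add_mul]

lemma ipZ_smul_left (d : ℕ) (z : ℤ) (a b : Fin d → ℤ) :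
    ipZ d (z • a) b = z * ipZ d a b := by
  rw [ipZ, ipZ, Finset.mul_sum]
  exact Finset.sum_congr rfl fun j _ => by simp [mul_assoc]

lemma ipZ_zero_left (d : ℕ) (b : Fin d → ℤ) : ipZ d 0 b = 0 := by simp [ipZ]

lemma ipZ_neg_right (d : ℕ) (a b : Fin d → ℤ) : ipZ d a (-b) = -ipZ d a b := by
  rw [ipZ, ipZ, ← Finset.sum_neg_distrib]
  exact Finset.sum_congr rfl fun j _ => by simp

lemma ipZ_span_orth {d : ℕ} {A B : Set (Fin d → ℤ)}
    (h : ∀ a ∈ A, ∀ b ∈ B, ipZ d a b = 0) :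
    ∀ a ∈ Submodule.span ℤ A, ∀ b ∈ Submodule.span ℤ B, ipZ d a b = 0 := by
  have hright : ∀ a ∈ A, ∀ b ∈ Submodule.span ℤ B, ipZ d a b = 0 := by
    intro a ha b hb
    induction hb using Submodule.span_induction with
    | mem y hy => exact h a ha y hy
    | zero => rw [ipZ_comm]; exact ipZ_zero_left d a
    | add y z hy hz ihy ihz =>
      rw [ipZ_comm, ipZ_add_left, ipZ_comm d y a, ipZ_comm d z a, ihy, ihz, add_zero]
    | smul t y hy ihy =>
      rw [ipZ_comm, ipZ_smul_left, ipZ_comm d y a, ihy, mul_zero]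
  intro a ha b hb
  induction ha using Submodule.span_induction with
  | mem y hy => exact hright y hy b hb
  | zero => exact ipZ_zero_left d b
  | add y z hy hz ihy ihz => rw [ipZ_add_left, ihy, ihz, add_zero]
  | smul t y hy ihy => rw [ipZ_smul_left, ihy, mul_zero]

/-- necessity in Proposition 2.5: if H_∞(I) is uniformly dense
in the continuous (2πℤ^d)-periodic functions, then I is a generator and
satisfies the connectedness condition. -/
theorem stmt10 (d : ℕ) (hd : 1 ≤ d) (I : Finset (Fin d → ℤ)) (hI : ∀ k ∈ I, k ≠ 0)
    (hdense : ∀ f : (Fin d → ℝ) → ℝ, Continuous f → Periodic2pi d f →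
      ∀ ε : ℝ, 0 < ε → ∃ g ∈ Hinf d I, ∀ x : Fin d → ℝ, |f x - g x| < ε) :
    IsGenerator d I ∧ ConnectedSet d I := by
  classical
  constructor
  · -- generator
    intro n
    by_contra hn
    push_neg at hn
    have hn' : n ∉ Submodule.span ℤ (I : Set (Fin d → ℤ)) := by
      intro hmem
      obtain ⟨f, -, hf⟩ := Submodule.mem_span_finset.1 hmem
      exact hn f hf.symm
    refine kill hI hdense (Submodule.span ℤ (I : Set (Fin d → ℤ)) : Set (Fin d → ℤ))
      (Submodule.zero_mem _) (fun k hk => Submodule.subset_span hk)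
      (fun k hk => Submodule.neg_mem _ (Submodule.subset_span hk))
      (fun k hk l hl _ => Submodule.add_mem _ hk hl) n hn' ?_ ?_
    · intro hc
      exact hn' (by simpa using Submodule.neg_mem _ (SetLike.mem_coe.1 hc))
    · intro h0
      apply hn'
      rw [h0]
      exact Submodule.zero_mem _
  · -- connectedness
    intro l hl m hm
    by_contra hcon
    push_neg at hcon
    -- reachability from l within I
    set reach : (Fin d → ℤ) → Prop := fun b => ∃ k : ℕ, ∃ ch : Fin (k+1) → (Fin d → ℤ),
      (∀ j, ch j ∈ I) ∧ ipZ d l (ch 0) ≠ 0 ∧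
      (∀ j : Fin k, ipZ d (ch j.castSucc) (ch j.succ) ≠ 0) ∧
      ch (Fin.last k) = b with hreachdef
    have hreachl : reach l :=
      ⟨0, fun _ => l, fun _ => hl, ipZ_self_ne_zero (hI l hl), fun j => j.elim0, rfl⟩
    have hext : ∀ a, reach a → ∀ b ∈ I, ipZ d a b ≠ 0 → reach b := by
      rintro a ⟨k, ch, hch, h0, hcons, hlast⟩ b hb hab
      refine ⟨k+1, Fin.snoc ch b, ?_, ?_, ?_, Fin.snoc_last _ _⟩
      · intro j
        refine Fin.lastCases ?_ ?_ j
        · rw [Fin.snoc_last]; exact hb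
        · intro i; rw [Fin.snoc_castSucc]; exact hch i
      · have h00 : (Fin.snoc ch b : Fin (k+2) → (Fin d → ℤ)) 0 = ch 0 := by
          have : (0 : Fin (k+2)) = Fin.castSucc 0 := rfl
          rw [this, Fin.snoc_castSucc]
        rw [h00]; exact h0
      · intro j
        refine Fin.lastCases ?_ ?_ j
        · rw [Fin.snoc_castSucc, Fin.succ_last, Fin.snoc_last, hlast]
          exact hab
        · intro i
          rw [Fin.snoc_castSucc, Fin.succ_castSucc, Fin.snoc_castSucc]
          exact hcons i
    have hnm : ¬ reach m := by
      rintro ⟨k, ch, hch, h0, hcons, hlast⟩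
      have := hcon k ch hch h0 hcons
      rw [hlast] at this
      exact ipZ_self_ne_zero (hI m hm) this
    set A : Set (Fin d → ℤ) := {b | b ∈ I ∧ reach b} with hA
    set B : Set (Fin d → ℤ) := {b | b ∈ I ∧ ¬ reach b} with hB
    have horthAB : ∀ a ∈ A, ∀ b ∈ B, ipZ d a b = 0 := by
      rintro a ⟨haI, har⟩ b ⟨hbI, hbr⟩
      by_contra hne
      exact hbr (hext a har b hbI hne)
    have horth := ipZ_span_orth horthAB
    have hlA : l ∈ Submodule.span ℤ A := Submodule.subset_span ⟨hl, hreachl⟩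
    have hmB : m ∈ Submodule.span ℤ B := Submodule.subset_span ⟨hm, hnm⟩
    set S : Set (Fin d → ℤ) :=
      (Submodule.span ℤ A : Set (Fin d → ℤ)) ∪ (Submodule.span ℤ B : Set (Fin d → ℤ)) with hSdef
    have hμ : l + m ∉ S := by
      rintro (hin | hin)
      · have hm' : m ∈ Submodule.span ℤ A := by
          have := Submodule.sub_mem _ (SetLike.mem_coe.1 hin) hlA
          simpa [add_sub_cancel_left] using this
        exact ipZ_self_ne_zero (hI m hm) (horth m hm' m hmB)
      · have hl' : l ∈ Submodule.span ℤ B := by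
          have := Submodule.sub_mem _ (SetLike.mem_coe.1 hin) hmB
          simpa [add_sub_cancel_right] using this
        exact ipZ_self_ne_zero (hI l hl) (horth l hlA l hl')
    refine kill hI hdense S ?_ ?_ ?_ ?_ (l + m) hμ ?_ ?_
    · exact Or.inl (Submodule.zero_mem _)
    · intro k hk
      by_cases hr : reach k
      · exact Or.inl (Submodule.subset_span ⟨hk, hr⟩)
      · exact Or.inr (Submodule.subset_span ⟨hk, hr⟩)
    · intro k hk
      by_cases hr : reach k
      · exact Or.inl (Submodule.neg_mem _ (Submodule.subset_span ⟨hk, hr⟩))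
      · exact Or.inr (Submodule.neg_mem _ (Submodule.subset_span ⟨hk, hr⟩))
    · rintro k (hk | hk) p (hp | hp) hne
      · exact Or.inl (Submodule.add_mem _ (SetLike.mem_coe.1 hk) (SetLike.mem_coe.1 hp))
      · exact absurd (horth k (SetLike.mem_coe.1 hk) p (SetLike.mem_coe.1 hp)) hne
      · exact absurd (by rw [ipZ_comm]
                         exact horth p (SetLike.mem_coe.1 hp) k (SetLike.mem_coe.1 hk)) hne
      · exact Or.inr (Submodule.add_mem _ (SetLike.mem_coe.1 hk) (SetLike.mem_coe.1 hp))
    · -- -(l+m) ∉ S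
      rintro (hin | hin)
      · exact hμ (Or.inl (by simpa using Submodule.neg_mem _ (SetLike.mem_coe.1 hin)))
      · exact hμ (Or.inr (by simpa using Submodule.neg_mem _ (SetLike.mem_coe.1 hin)))
    · -- l + m ≠ 0
      intro h0
      have hm' : m = -l := by
        funext j
        have := congrFun h0 j
        simp only [Pi.add_apply, Pi.zero_apply, Pi.neg_apply] at this ⊢
        omega
      have h1 : ipZ d l m = 0 := horth l hlA m hmB
      rw [hm', ipZ_neg_right] at h1
      exact ipZ_self_ne_zero (hI l hl) (by omega)
end

section
/- Let d ≥ 1, let I ⊂ ℤ^d∖{0} be a finite set, and let G ⊆ ℤ^d be the set of all ℤ-linear combinations of elements of I (the subgroup of ℤ^d generated by I). Then every element of H_∞(I) belongs to the ℝ-linear span of the family {c_m : m ∈ G} ∪ {s_m : m ∈ G} (note c_0 = 1). -/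
open Real MeasureTheory

def Gset (d : ℕ) (I : Finset (Fin d → ℤ)) : Set (Fin d → ℤ) :=
  {n : Fin d → ℤ | ∃ a : (Fin d → ℤ) → ℤ, n = ∑ k ∈ I, a k • k}

noncomputable def Ssub (d : ℕ) (I : Finset (Fin d → ℤ)) :
    Submodule ℝ ((Fin d → ℝ) → ℝ) :=
  Submodule.span ℝ (⋃ m ∈ Gset d I, {cmap d m, smap d m})

lemma Gset_zero (d : ℕ) (I : Finset (Fin d → ℤ)) : (0 : Fin d → ℤ) ∈ Gset d I :=
  ⟨0, by simp⟩

lemma Gset_mem_of_mem (d : ℕ) (I : Finset (Fin d → ℤ)) {k : Fin d → ℤ} (hk : k ∈ I) :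
    k ∈ Gset d I := by
  refine ⟨fun n => if n = k then 1 else 0, ?_⟩
  simp only [ite_smul, one_smul, zero_smul, Finset.sum_ite_eq', hk, if_true]

lemma Gset_add (d : ℕ) (I : Finset (Fin d → ℤ)) {m l : Fin d → ℤ}
    (hm : m ∈ Gset d I) (hl : l ∈ Gset d I) : m + l ∈ Gset d I := by
  obtain ⟨a, ha⟩ := hm; obtain ⟨b, hb⟩ := hl
  exact ⟨a + b, by rw [ha, hb, ← Finset.sum_add_distrib]; simp [add_smul]⟩

lemma Gset_sub (d : ℕ) (I : Finset (Fin d → ℤ)) {m l : Fin d → ℤ}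
    (hm : m ∈ Gset d I) (hl : l ∈ Gset d I) : m - l ∈ Gset d I := by
  obtain ⟨a, ha⟩ := hm; obtain ⟨b, hb⟩ := hl
  exact ⟨a - b, by rw [ha, hb, ← Finset.sum_sub_distrib]; simp [sub_smul]⟩

lemma cmap_mem (d : ℕ) (I : Finset (Fin d → ℤ)) {m : Fin d → ℤ} (hm : m ∈ Gset d I) :
    cmap d m ∈ Ssub d I :=
  Submodule.subset_span (Set.mem_biUnion hm (by simp))

lemma smap_mem (d : ℕ) (I : Finset (Fin d → ℤ)) {m : Fin d → ℤ} (hm : m ∈ Gset d I) :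
    smap d m ∈ Ssub d I :=
  Submodule.subset_span (Set.mem_biUnion hm (by simp))

lemma ip_add (d : ℕ) (x : Fin d → ℝ) (m l : Fin d → ℤ) :
    ip d x (m + l) = ip d x m + ip d x l := by
  simp [ip, mul_add, Finset.sum_add_distrib]

lemma ip_sub (d : ℕ) (x : Fin d → ℝ) (m l : Fin d → ℤ) :
    ip d x (m - l) = ip d x m - ip d x l := by
  simp [ip, mul_sub, Finset.sum_sub_distrib]

lemma cmap_mul_cmap (d : ℕ) (m l : Fin d → ℤ) :
    cmap d m * cmap d l = (1/2 : ℝ) • cmap d (m - l) + (1/2 : ℝ) • cmap d (m + l) := by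
  funext x
  simp only [Pi.mul_apply, Pi.add_apply, Pi.smul_apply, smul_eq_mul, cmap, ip_add, ip_sub,
    Real.cos_add, Real.cos_sub]
  ring

lemma smap_mul_smap (d : ℕ) (m l : Fin d → ℤ) :
    smap d m * smap d l = (1/2 : ℝ) • cmap d (m - l) - (1/2 : ℝ) • cmap d (m + l) := by
  funext x
  simp only [Pi.mul_apply, Pi.sub_apply, Pi.smul_apply, smul_eq_mul, cmap, smap, ip_add, ip_sub,
    Real.cos_add, Real.cos_sub]
  ring

lemma smap_mul_cmap (d : ℕ) (m l : Fin d → ℤ) :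
    smap d m * cmap d l = (1/2 : ℝ) • smap d (m + l) + (1/2 : ℝ) • smap d (m - l) := by
  funext x
  simp only [Pi.mul_apply, Pi.add_apply, Pi.smul_apply, smul_eq_mul, cmap, smap, ip_add, ip_sub,
    Real.sin_add, Real.sin_sub]
  ring

lemma cmap_mul_smap (d : ℕ) (m l : Fin d → ℤ) :
    cmap d m * smap d l = (1/2 : ℝ) • smap d (m + l) - (1/2 : ℝ) • smap d (m - l) := by
  funext x
  simp only [Pi.mul_apply, Pi.sub_apply, Pi.smul_apply, smul_eq_mul, cmap, smap, ip_add, ip_sub,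
    Real.sin_add, Real.sin_sub]
  ring

lemma mul_mem_Ssub (d : ℕ) (I : Finset (Fin d → ℤ)) {f g : (Fin d → ℝ) → ℝ}
    (hf : f ∈ Ssub d I) (hg : g ∈ Ssub d I) : f * g ∈ Ssub d I := by
  have key : Ssub d I * Ssub d I ≤ Ssub d I := by
    rw [Ssub, Submodule.span_mul_span]
    apply Submodule.span_le.mpr
    rintro p hp
    rw [Set.mem_mul] at hp
    obtain ⟨a, ha, b, hb, rfl⟩ := hp
    simp only [Set.mem_iUnion, Set.mem_insert_iff, Set.mem_singleton_iff] at ha hb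
    obtain ⟨m, hm, ha⟩ := ha
    obtain ⟨l, hl, hb⟩ := hb
    have h1 := cmap_mem d I (Gset_sub d I hm hl)
    have h2 := cmap_mem d I (Gset_add d I hm hl)
    have h3 := smap_mem d I (Gset_add d I hm hl)
    have h4 := smap_mem d I (Gset_sub d I hm hl)
    rcases ha with rfl | rfl <;> rcases hb with rfl | rfl
    · rw [cmap_mul_cmap]
      exact add_mem (Submodule.smul_mem _ _ h1) (Submodule.smul_mem _ _ h2)
    · rw [cmap_mul_smap]
      exact sub_mem (Submodule.smul_mem _ _ h3) (Submodule.smul_mem _ _ h4)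
    · rw [smap_mul_cmap]
      exact add_mem (Submodule.smul_mem _ _ h3) (Submodule.smul_mem _ _ h4)
    · rw [smap_mul_smap]
      exact sub_mem (Submodule.smul_mem _ _ h1) (Submodule.smul_mem _ _ h2)
  exact key (Submodule.mul_mem_mul hf hg)

noncomputable def ipL (d : ℕ) (m : Fin d → ℤ) : (Fin d → ℝ) →L[ℝ] ℝ :=
  ∑ j, (m j : ℝ) • (ContinuousLinearMap.proj j)

lemma ipL_apply (d : ℕ) (m : Fin d → ℤ) (x : Fin d → ℝ) : ipL d m x = ip d x m := by
  simp [ipL, ip, ContinuousLinearMap.sum_apply, mul_comm]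

lemma hasFDerivAt_ip (d : ℕ) (m : Fin d → ℤ) (x : Fin d → ℝ) :
    HasFDerivAt (fun y => ip d y m) (ipL d m) x := by
  have : (fun y => ip d y m) = ipL d m := funext fun y => (ipL_apply d m y).symm
  rw [this]
  exact (ipL d m).hasFDerivAt

lemma ipL_single (d : ℕ) (m : Fin d → ℤ) (j : Fin d) :
    ipL d m (Pi.single j 1) = (m j : ℝ) := by
  simp [ipL, ContinuousLinearMap.sum_apply, Pi.single_apply]

lemma hasFDerivAt_cmap (d : ℕ) (m : Fin d → ℤ) (x : Fin d → ℝ) :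
    HasFDerivAt (cmap d m) ((-Real.sin (ip d x m)) • ipL d m) x :=
  (Real.hasDerivAt_cos (ip d x m)).comp_hasFDerivAt x (hasFDerivAt_ip d m x)

lemma hasFDerivAt_smap (d : ℕ) (m : Fin d → ℤ) (x : Fin d → ℝ) :
    HasFDerivAt (smap d m) ((Real.cos (ip d x m)) • ipL d m) x :=
  (Real.hasDerivAt_sin (ip d x m)).comp_hasFDerivAt x (hasFDerivAt_ip d m x)

lemma deriv_mem (d : ℕ) (I : Finset (Fin d → ℤ)) {θ : (Fin d → ℝ) → ℝ}
    (hθ : θ ∈ Ssub d I) :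
    Differentiable ℝ θ ∧
      ∀ j, (fun x => fderiv ℝ θ x (Pi.single j 1)) ∈ Ssub d I := by
  induction hθ using Submodule.span_induction with
  | mem f hf =>
    simp only [Set.mem_iUnion, Set.mem_insert_iff, Set.mem_singleton_iff] at hf
    obtain ⟨m, hm, hf⟩ := hf
    rcases hf with rfl | rfl
    · constructor
      · exact fun x => (hasFDerivAt_cmap d m x).differentiableAt
      · intro j
        have : (fun x => fderiv ℝ (cmap d m) x (Pi.single j 1))
            = (-(m j : ℝ)) • smap d m := by
          funext x
          rw [(hasFDerivAt_cmap d m x).fderiv]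
          simp [ipL_single, smap, mul_comm]
        rw [this]
        exact Submodule.smul_mem _ _ (smap_mem d I hm)
    · constructor
      · exact fun x => (hasFDerivAt_smap d m x).differentiableAt
      · intro j
        have : (fun x => fderiv ℝ (smap d m) x (Pi.single j 1))
            = ((m j : ℝ)) • cmap d m := by
          funext x
          rw [(hasFDerivAt_smap d m x).fderiv]
          simp [ipL_single, cmap, mul_comm]
        rw [this]
        exact Submodule.smul_mem _ _ (cmap_mem d I hm)
  | zero =>
    refine ⟨differentiable_const 0, fun j => ?_⟩
    have : (fun x : Fin d → ℝ => fderiv ℝ (0 : (Fin d → ℝ) → ℝ) x (Pi.single j 1)) = 0 := by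
      funext x
      have : (0 : (Fin d → ℝ) → ℝ) = fun _ => (0:ℝ) := rfl
      rw [this, fderiv_fun_const]
      simp
    rw [this]
    exact Submodule.zero_mem _
  | add f g hfm hgm ihf ihg =>
    refine ⟨ihf.1.add ihg.1, fun j => ?_⟩
    have : (fun x => fderiv ℝ (f + g) x (Pi.single j 1))
        = (fun x => fderiv ℝ f x (Pi.single j 1)) + fun x => fderiv ℝ g x (Pi.single j 1) := by
      funext x
      have : fderiv ℝ (f + g) x = fderiv ℝ f x + fderiv ℝ g x := by
        have := fderiv_add (ihf.1 x) (ihg.1 x) (𝕜 := ℝ)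
        simpa using this
      simp [this]
    rw [this]
    exact add_mem (ihf.2 j) (ihg.2 j)
  | smul c f hfm ihf =>
    refine ⟨ihf.1.const_smul c, fun j => ?_⟩
    have : (fun x => fderiv ℝ (c • f) x (Pi.single j 1))
        = c • fun x => fderiv ℝ f x (Pi.single j 1) := by
      funext x
      have : fderiv ℝ (c • f) x = c • fderiv ℝ f x := by
        have := fderiv_const_smul (ihf.1 x) c
        simpa using this
      simp [this]
    rw [this]
    exact Submodule.smul_mem _ _ (ihf.2 j)

lemma Bop_mem (d : ℕ) (I : Finset (Fin d → ℤ)) {θ : (Fin d → ℝ) → ℝ}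
    (hθ : θ ∈ Ssub d I) : Bop d θ ∈ Ssub d I := by
  obtain ⟨_, hderiv⟩ := deriv_mem d I hθ
  have : Bop d θ = ∑ j : Fin d,
      (fun x => fderiv ℝ θ x (Pi.single j 1)) * fun x => fderiv ℝ θ x (Pi.single j 1) := by
    funext x
    simp [Bop, Finset.sum_apply, sq]
  rw [this]
  exact Submodule.sum_mem _ fun j _ => mul_mem_Ssub d I (hderiv j) (hderiv j)
/-- every element of H_∞(I) lies in the ℝ-linear span of
{c_m, s_m : m in the subgroup of ℤ^d generated by I}. -/
theorem stmt11 (d : ℕ) (hd : 1 ≤ d) (I : Finset (Fin d → ℤ)) (hI : ∀ k ∈ I, k ≠ 0) :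
    Hinf d I ⊆
      ↑(Submodule.span ℝ
        (⋃ m ∈ {n : Fin d → ℤ | ∃ a : (Fin d → ℤ) → ℤ, n = ∑ k ∈ I, a k • k},
          {cmap d m, smap d m})) := by
  have hS : ∀ j, HSeq d I j ⊆ (Ssub d I : Set ((Fin d → ℝ) → ℝ)) := by
    intro j
    induction j with
    | zero =>
      intro f hf
      refine Submodule.span_le.mpr ?_ hf
      rintro g (hg | hg)
      · rw [Set.mem_singleton_iff] at hg
        subst hg
        have h1 : (fun _ : Fin d → ℝ => (1:ℝ)) = cmap d 0 := by
          funext x; simp [cmap, ip]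
        rw [h1]
        exact cmap_mem d I (Gset_zero d I)
      · simp only [Set.mem_iUnion, Set.mem_insert_iff, Set.mem_singleton_iff] at hg
        obtain ⟨k, hk, hg⟩ := hg
        rcases hg with rfl | rfl
        · exact cmap_mem d I (Gset_mem_of_mem d I hk)
        · exact smap_mem d I (Gset_mem_of_mem d I hk)
    | succ j ih =>
      intro f hf
      obtain ⟨hf1, -⟩ := hf
      obtain ⟨n, -, θ₀, hθ₀, θ, hθ, hfe⟩ := hf1
      subst hfe
      exact sub_mem (ih hθ₀)
        (Submodule.sum_mem _ fun i _ => Bop_mem d I (ih (hθ i)))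
  intro f hf
  obtain ⟨s, ⟨j, rfl⟩, hj⟩ := hf
  exact hS j hj
end
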